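/- Let φ : ℝ → ℝ be continuously differentiable and define β : ℝ → ℝ² by β(s) = (∫₀ˢ sinh(φ(t)) dt, ∫₀ˢ cosh(φ(t)) dt). Then β is twice differentiable with β''(s) = φ'(s) · (cosh(φ(s)), sinh(φ(s))) and Q(β''(s)) = φ'(s)² for every s; consequently the curvature of β at s, defined as the Lorentzian norm √Q(β''(s)) of the (spacelike) acceleration, equals |φ'(s)|. -/

import Mathlib

/-- Lorentzian quadratic form on ℝ²: `Q(v) = v₀² − v₁²`. -/
def lorentzQ (v : ℝ × ℝ) : ℝ := v.1 ^ 2 - v.2 ^ 2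

/-- For the timelike planar Euler spiral `β(s) = (∫₀ˢ sinh(φ t) dt, ∫₀ˢ cosh(φ t) dt)`
with `φ` continuously differentiable, `β` is twice differentiable with
`β'(s) = (sinh(φ s), cosh(φ s))`, `β''(s) = φ'(s) • (cosh(φ s), sinh(φ s))`, and
`Q(β''(s)) = φ'(s)²`; hence the curvature `√(Q(β''(s)))` equals `|φ'(s)|`. -/
theorem timelike_planar_euler_spiral_curvature
    (φ : ℝ → ℝ) (hφ : ContDiff ℝ 1 φ)
    (β : ℝ → ℝ × ℝ)
    (hβ : ∀ s : ℝ, β s =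
      (∫ t in (0:ℝ)..s, Real.sinh (φ t), ∫ t in (0:ℝ)..s, Real.cosh (φ t))) :
    ∀ s : ℝ,
      HasDerivAt β (Real.sinh (φ s), Real.cosh (φ s)) s ∧
      HasDerivAt (fun u : ℝ => ((Real.sinh (φ u), Real.cosh (φ u)) : ℝ × ℝ))
        (deriv φ s • ((Real.cosh (φ s), Real.sinh (φ s)) : ℝ × ℝ)) s ∧
      lorentzQ (deriv φ s • ((Real.cosh (φ s), Real.sinh (φ s)) : ℝ × ℝ))
        = (deriv φ s) ^ 2 ∧
      Real.sqrt (lorentzQ (deriv φ s • ((Real.cosh (φ s), Real.sinh (φ s)) : ℝ × ℝ)))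
        = |deriv φ s| := by
  intro s
  have hφc : Continuous φ := hφ.continuous
  have hφd : HasDerivAt φ (deriv φ s) s :=
    ((hφ.differentiable one_ne_zero) s).hasDerivAt
  have h1 : HasDerivAt (fun u : ℝ => ∫ t in (0:ℝ)..u, Real.sinh (φ t))
      (Real.sinh (φ s)) s :=
    intervalIntegral.integral_hasDerivAt_right
      ((Real.continuous_sinh.comp hφc).intervalIntegrable 0 s)
      ((Real.continuous_sinh.comp hφc).stronglyMeasurableAtFilter _ _)
      (Real.continuous_sinh.comp hφc).continuousAt
  have h2 : HasDerivAt (fun u : ℝ => ∫ t in (0:ℝ)..u, Real.cosh (φ t))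
      (Real.cosh (φ s)) s :=
    intervalIntegral.integral_hasDerivAt_right
      ((Real.continuous_cosh.comp hφc).intervalIntegrable 0 s)
      ((Real.continuous_cosh.comp hφc).stronglyMeasurableAtFilter _ _)
      (Real.continuous_cosh.comp hφc).continuousAt
  refine ⟨?_, ?_, ?_, ?_⟩
  · have := h1.prodMk h2
    have hfun : β = fun u : ℝ =>
        ((∫ t in (0:ℝ)..u, Real.sinh (φ t), ∫ t in (0:ℝ)..u, Real.cosh (φ t)) : ℝ × ℝ) :=
      funext hβ
    rw [hfun]
    exact this
  · have hs : HasDerivAt (fun u : ℝ => Real.sinh (φ u))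
        (Real.cosh (φ s) * deriv φ s) s := (Real.hasDerivAt_sinh (φ s)).comp s hφd
    have hc : HasDerivAt (fun u : ℝ => Real.cosh (φ u))
        (Real.sinh (φ s) * deriv φ s) s := (Real.hasDerivAt_cosh (φ s)).comp s hφd
    have := hs.prodMk hc
    simpa [Prod.smul_mk, smul_eq_mul, mul_comm] using this
  · have h := Real.cosh_sq_sub_sinh_sq (φ s)
    simp only [lorentzQ, Prod.smul_mk, smul_eq_mul]
    nlinarith [h]
  · have h := Real.cosh_sq_sub_sinh_sq (φ s)
    have : lorentzQ (deriv φ s • ((Real.cosh (φ s), Real.sinh (φ s)) : ℝ × ℝ))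
        = (deriv φ s) ^ 2 := by
      simp only [lorentzQ, Prod.smul_mk, smul_eq_mul]
      nlinarith [h]
    rw [this, Real.sqrt_sq_eq_abs]
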